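/- Suppose c* > 0 satisfies c*^{p−2} − 4π q² c*² − ω = 0 with ω, q > 0 and p > 4. Then the constant function u ≡ c* lies on the Nehari manifold N_ε and its energy satisfies J_ε(c*) ≥ (μ_g(M)/ε³)[c*²/4 + (1/4 − 1/p)c*^p] → +∞ as ε → 0. In particular, for every fixed energy bound C > 0 there exists ε₀ > 0 such that for all ε < ε₀ no constant solution of the system has energy ≤ C. -/

import Mathlib

open Filter Topology Real

lemma stmt17_key (ω q p : ℝ) (c : ℝ) (hc : 0 < c)
    (hroot : c ^ (p - 2) - 4 * π * q ^ 2 * c ^ 2 - ω = 0) :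
    c ^ p = ω * c ^ 2 + 4 * π * q ^ 2 * c ^ 4 := by
  have h2 : c ^ p = c ^ (p - 2) * c ^ (2 : ℕ) := by
    rw [← Real.rpow_natCast c 2, ← Real.rpow_add hc]
    norm_num
  push_cast at h2
  linear_combination h2 + c ^ 2 * hroot

/-- Constant solutions have diverging energy: if `c* > 0` satisfies
`c*^{p−2} − 4πq²c*² − ω = 0` with `ω, q > 0` and `p > 4`, then the constant
function `u ≡ c*` lies on the Nehari manifold `N_ε` (its Nehari functional vanishes),
its energy satisfies
`J_ε(c*) = (μ_g(M)/ε³)[(ω/2)c*² + πq²c*⁴ − c*^p/p] ≥ (μ_g(M)/ε³)[ωc*²/4 + (1/4 − 1/p)c*^p]`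
and tends to `+∞` as `ε → 0⁺`; in particular, for every energy bound `C > 0` there is
`ε₀ > 0` such that for `ε < ε₀` no constant solution has energy `≤ C`. -/
theorem stmt17 (ω q p μM c₀ : ℝ) (hω : 0 < ω) (hq : 0 < q) (hp : 4 < p)
    (hμM : 0 < μM) (hc₀ : 0 < c₀)
    (hroot : c₀ ^ (p - 2) - 4 * π * q ^ 2 * c₀ ^ 2 - ω = 0) :
    (∀ ε : ℝ, 0 < ε →
        (μM / ε ^ 3) * (ω * c₀ ^ 2 + 4 * π * q ^ 2 * c₀ ^ 4 - c₀ ^ p) = 0) ∧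
      (∀ ε : ℝ, 0 < ε →
        (μM / ε ^ 3) * (ω * c₀ ^ 2 / 4 + (1 / 4 - 1 / p) * c₀ ^ p)
          ≤ (μM / ε ^ 3) *
              ((ω / 2) * c₀ ^ 2 + π * q ^ 2 * c₀ ^ 4 - (1 / p) * c₀ ^ p)) ∧
      Tendsto
        (fun ε : ℝ => (μM / ε ^ 3) *
          ((ω / 2) * c₀ ^ 2 + π * q ^ 2 * c₀ ^ 4 - (1 / p) * c₀ ^ p))
        (nhdsWithin 0 (Set.Ioi 0)) atTop ∧
      ∀ C : ℝ, 0 < C → ∃ ε₀ : ℝ, 0 < ε₀ ∧ ∀ ε : ℝ, 0 < ε → ε < ε₀ →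
        ∀ c : ℝ, 0 < c → c ^ (p - 2) - 4 * π * q ^ 2 * c ^ 2 - ω = 0 →
          C < (μM / ε ^ 3) *
              ((ω / 2) * c ^ 2 + π * q ^ 2 * c ^ 4 - (1 / p) * c ^ p) := by
  have hp0 : (0 : ℝ) < p := by linarith
  have hkey := stmt17_key ω q p c₀ hc₀ hroot
  -- the energy constant for a root c, rewritten
  have hK : ∀ c : ℝ, 0 < c → c ^ p = ω * c ^ 2 + 4 * π * q ^ 2 * c ^ 4 →
      (ω / 2) * c ^ 2 + π * q ^ 2 * c ^ 4 - (1 / p) * c ^ p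
        = (1 / 2 - 1 / p) * ω * c ^ 2 + (1 - 4 / p) * π * q ^ 2 * c ^ 4 := by
    intro c hc hid
    field_simp
    linear_combination (-2) * hid
  refine ⟨?_, ?_, ?_, ?_⟩
  · intro ε hε
    have : ω * c₀ ^ 2 + 4 * π * q ^ 2 * c₀ ^ 4 - c₀ ^ p = 0 := by linarith
    rw [this, mul_zero]
  · intro ε hε
    apply le_of_eq
    congr 1
    field_simp
    linear_combination 2 * p * hkey
  · have hKpos : 0 < (ω / 2) * c₀ ^ 2 + π * q ^ 2 * c₀ ^ 4 - (1 / p) * c₀ ^ p := by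
      rw [hK c₀ hc₀ hkey]
      have h1 : 0 < (1 / 2 - 1 / p) := by
        rw [sub_pos, div_lt_div_iff₀ hp0 (by norm_num)]; linarith
      have h2 : 0 < (1 - 4 / p) := by
        rw [sub_pos, div_lt_one hp0]; linarith
      have := Real.pi_pos
      positivity
    set K := (ω / 2) * c₀ ^ 2 + π * q ^ 2 * c₀ ^ 4 - (1 / p) * c₀ ^ p with hKdef
    have h1 : Tendsto (fun ε : ℝ => ε ^ 3) (𝓝[>] (0 : ℝ)) (𝓝[>] (0 : ℝ)) := by
      apply tendsto_nhdsWithin_of_tendsto_nhds_of_eventually_within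
      · have : Tendsto (fun ε : ℝ => ε ^ 3) (𝓝 0) (𝓝 0) := by
          simpa using (continuous_pow 3).tendsto (0 : ℝ)
        exact this.mono_left nhdsWithin_le_nhds
      · filter_upwards [self_mem_nhdsWithin] with x hx
        exact pow_pos (Set.mem_Ioi.mp hx) 3
    have h2 := tendsto_inv_nhdsGT_zero.comp h1
    have h3 := h2.const_mul_atTop (mul_pos hμM hKpos)
    apply h3.congr
    intro ε
    simp only [Function.comp]
    field_simp
  · intro C hC
    have hm : 0 < ω ^ (p - 2)⁻¹ := Real.rpow_pos_of_pos hω _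
    set m := ω ^ (p - 2)⁻¹ with hmdef
    set δ := (1 / 2 - 1 / p) * ω * m ^ 2 with hδdef
    have h1 : 0 < (1 / 2 - 1 / p) := by
      rw [sub_pos, div_lt_div_iff₀ hp0 (by norm_num)]; linarith
    have hδ : 0 < δ := by positivity
    clear_value m δ
    refine ⟨(μM * δ / (2 * C)) ^ ((3 : ℝ)⁻¹), Real.rpow_pos_of_pos (by positivity) _, ?_⟩
    intro ε hε hεlt c hc hcroot
    have hkeyc := stmt17_key ω q p c hc hcroot
    -- lower bound on c
    have hcp : ω < c ^ (p - 2) := by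
      have hpos4 : 0 < 4 * π * q ^ 2 * c ^ 2 := by
        have := Real.pi_pos; positivity
      linarith
    have hmc : m ≤ c := by
      rw [hmdef]
      have hx : ω ^ (p - 2)⁻¹ ≤ (c ^ (p - 2)) ^ (p - 2)⁻¹ :=
        Real.rpow_le_rpow hω.le hcp.le (inv_nonneg.mpr (by linarith))
      rwa [Real.rpow_rpow_inv hc.le (sub_ne_zero.mpr (by linarith))] at hx
    -- energy bounded below by δ
    have hKc : δ ≤ (ω / 2) * c ^ 2 + π * q ^ 2 * c ^ 4 - (1 / p) * c ^ p := by
      rw [hK c hc hkeyc]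
      have h2 : 0 ≤ (1 - 4 / p) := by
        rw [sub_nonneg, div_le_one hp0]; linarith
      have hm2 : m ^ 2 ≤ c ^ 2 := by nlinarith
      have t1 := mul_le_mul_of_nonneg_left hm2 (mul_pos h1 hω).le
      have t2 := mul_nonneg (mul_nonneg (mul_nonneg h2 Real.pi_pos.le) (sq_nonneg q))
        (pow_pos hc 4).le
      rw [hδdef]
      nlinarith [t1, t2]
    clear hδdef hmdef
    -- ε₀ ^ 3 = μM * δ / (2 * C)
    have hε₀3 : ((μM * δ / (2 * C)) ^ ((3 : ℝ)⁻¹)) ^ (3 : ℕ) = μM * δ / (2 * C) := by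
      rw [← Real.rpow_natCast (_ ^ ((3:ℝ)⁻¹)) 3]
      push_cast
      exact Real.rpow_inv_rpow (by positivity) (by norm_num)
    have hε3 : ε ^ 3 < μM * δ / (2 * C) := by
      calc ε ^ 3 < ((μM * δ / (2 * C)) ^ ((3 : ℝ)⁻¹)) ^ 3 := by
            exact pow_lt_pow_left₀ hεlt hε.le (by norm_num)
        _ = _ := hε₀3
    have hdiv : 2 * C / δ < μM / ε ^ 3 := by
      rw [div_lt_div_iff₀ hδ (by positivity)]
      calc 2 * C * ε ^ 3 < 2 * C * (μM * δ / (2 * C)) := by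
            exact mul_lt_mul_of_pos_left hε3 (by positivity)
        _ = μM * δ := by field_simp
    have hpos : (0 : ℝ) < μM / ε ^ 3 := by positivity
    have hA := mul_lt_mul_of_pos_right hdiv hδ
    rw [div_mul_cancel₀ _ hδ.ne'] at hA
    have hB := mul_le_mul_of_nonneg_left hKc hpos.le
    exact lt_trans (by linarith) (lt_of_lt_of_le hA hB)
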